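/- Let Φ(z,y) be a bivariate polynomial and y(z) a power series analytic at 0 with Φ(z, y(z)) = 0 identically. If ρ is a singularity of y(z) with finite limit π = lim_{z→ρ⁻} y(z) and ∂Φ/∂y does not vanish identically along y, then (ρ, π) satisfies Φ(ρ,π) = 0 and Φ_y(ρ,π) = 0; in particular ρ is a root of the resultant Δ(z) = Res_y(Φ(z,y), Φ_y(z,y)). -/

import Mathlib

open Polynomial Filter Set

lemma analytic_P (Φ : Polynomial (Polynomial ℂ)) :
    AnalyticOnNhd ℂ (fun p : ℂ × ℂ => (Φ.map (evalRingHom p.1)).eval p.2) Set.univ := by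
  induction Φ using Polynomial.induction_on' with
  | add p q hp hq =>
      have := hp.add hq
      simp only [Polynomial.map_add, Polynomial.eval_add]
      exact this
  | monomial n a =>
      have h1 : AnalyticOnNhd ℂ (fun p : ℂ × ℂ => Polynomial.aeval p.1 a) Set.univ :=
        analyticOnNhd_fst.aeval_polynomial a
      have h2 : AnalyticOnNhd ℂ (fun p : ℂ × ℂ => p.2 ^ n) Set.univ :=
        analyticOnNhd_snd.pow n
      refine AnalyticOnNhd.congr isOpen_univ (h1.mul h2) ?_
      intro p _
      simp only [Polynomial.map_monomial, Polynomial.eval_monomial, Polynomial.coe_aeval_eq_eval,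
        Polynomial.coe_evalRingHom]

theorem main_aux
    (Φ : Polynomial (Polynomial ℂ)) (y : ℂ → ℂ) (ρ : ℝ) (π : ℂ)
    (hρ : 0 < ρ)
    (hy : AnalyticOnNhd ℂ y (Metric.ball (0 : ℂ) ρ))
    (heq : ∀ z ∈ Metric.ball (0 : ℂ) ρ,
      (Φ.map (evalRingHom z)).eval (y z) = 0)
    (hsing : ¬ ∃ g : ℂ → ℂ, AnalyticAt ℂ g (ρ : ℂ) ∧
      ∀ᶠ z in nhdsWithin (ρ : ℂ) (Metric.ball (0 : ℂ) ρ), g z = y z)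
    (hlim : Filter.Tendsto (fun x : ℝ => y x)
      (nhdsWithin ρ (Set.Iio ρ)) (nhds π)) :
    (Φ.map (evalRingHom (ρ : ℂ))).eval π = 0 ∧
    ((derivative Φ).map (evalRingHom (ρ : ℂ))).eval π = 0 := by
  set ρ₀ : ℂ := (ρ : ℂ) with hρ₀
  set P : ℂ × ℂ → ℂ := fun p => (Φ.map (evalRingHom p.1)).eval p.2 with hPdef
  set Q : ℂ × ℂ → ℂ := fun p => ((derivative Φ).map (evalRingHom p.1)).eval p.2 with hQdef
  have hP : AnalyticOnNhd ℂ P Set.univ := analytic_P Φ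
  have hcoe : Tendsto (fun x : ℝ => (x : ℂ)) (nhdsWithin ρ (Set.Iio ρ)) (nhds ρ₀) :=
    Complex.continuous_ofReal.continuousAt.tendsto.mono_left nhdsWithin_le_nhds
  have htend : Tendsto (fun x : ℝ => ((x : ℂ), y x))
      (nhdsWithin ρ (Set.Iio ρ)) (nhds (ρ₀, π)) := hcoe.prodMk_nhds hlim
  have evball : ∀ᶠ x : ℝ in nhdsWithin ρ (Set.Iio ρ), (x : ℂ) ∈ Metric.ball (0 : ℂ) ρ := by
    have h1 : ∀ᶠ x : ℝ in nhdsWithin ρ (Set.Iio ρ), x ∈ Set.Ioi (0:ℝ) :=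
      mem_nhdsWithin_of_mem_nhds (Ioi_mem_nhds hρ)
    filter_upwards [h1, self_mem_nhdsWithin] with x hx1 hx2
    simp only [Metric.mem_ball, Complex.dist_eq, sub_zero, Complex.norm_real, Real.norm_eq_abs]
    rw [abs_of_pos (show (0:ℝ) < x from hx1)]
    exact hx2
  -- Part 1 : P (ρ₀, π) = 0
  have hπ : P (ρ₀, π) = 0 := by
    have h0 : Tendsto (fun x : ℝ => P ((x:ℂ), y x)) (nhdsWithin ρ (Set.Iio ρ))
        (nhds (P (ρ₀, π))) := ((hP _ (mem_univ _)).continuousAt.tendsto).comp htend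
    have h0' : (fun x : ℝ => P ((x:ℂ), y x)) =ᶠ[nhdsWithin ρ (Set.Iio ρ)]
        (fun _ => (0:ℂ)) := evball.mono fun x hx => heq _ hx
    have h1 : Tendsto (fun _ : ℝ => (0:ℂ)) (nhdsWithin ρ (Set.Iio ρ)) (nhds (P (ρ₀, π))) :=
      h0.congr' h0'
    exact (tendsto_nhds_unique h1 tendsto_const_nhds)
  -- Part 2 : Q (ρ₀, π) = 0
  have hQπ : Q (ρ₀, π) = 0 := by
    by_contra hb0
    -- set up the implicit function theorem
    have hPs : HasStrictFDerivAt P (fderiv ℂ P (ρ₀, π)) (ρ₀, π) :=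
      (hP _ (mem_univ _)).hasStrictFDerivAt
    set L : (ℂ × ℂ) →L[ℂ] ℂ := fderiv ℂ P (ρ₀, π) with hL
    set a : ℂ := L (1, 0) with ha
    set b : ℂ := L (0, 1) with hbdef
    have hLlin : ∀ u v : ℂ, L (u, v) = u * a + v * b := by
      intro u v
      have h : (u, v) = u • ((1:ℂ), (0:ℂ)) + v • ((0:ℂ), (1:ℂ)) := by
        simp [Prod.ext_iff]
      rw [h, map_add, map_smul, map_smul, smul_eq_mul, smul_eq_mul]
    have hbQ : b = Q (ρ₀, π) := by
      have hc : HasDerivAt (fun w : ℂ => (ρ₀, w)) ((0:ℂ), (1:ℂ)) π :=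
        (hasDerivAt_const π ρ₀).prodMk (hasDerivAt_id π)
      have h2 : HasDerivAt (fun w : ℂ => P (ρ₀, w)) (L (0, 1)) π :=
        hPs.hasFDerivAt.comp_hasDerivAt π hc
      have h1 : HasDerivAt (fun w : ℂ => P (ρ₀, w)) (Q (ρ₀, π)) π := by
        have h := Polynomial.hasDerivAt (Φ.map (evalRingHom ρ₀)) π
        rw [Polynomial.derivative_map] at h
        exact h
      exact h2.unique h1
    have hb : b ≠ 0 := by rw [hbQ]; exact hb0
    -- the continuous linear equivalence
    let Lfst : (ℂ × ℂ) →L[ℂ] ℂ := ContinuousLinearMap.fst ℂ ℂ ℂ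
    let Lsnd : (ℂ × ℂ) →L[ℂ] ℂ := ContinuousLinearMap.snd ℂ ℂ ℂ
    let i : (ℂ × ℂ) ≃L[ℂ] (ℂ × ℂ) := ContinuousLinearEquiv.equivOfInverse
      (Lfst.prod L) (Lfst.prod (b⁻¹ • (Lsnd - a • Lfst)))
      (by
        intro x
        have hx : L x = x.1 * a + x.2 * b := by
          rw [show x = (x.1, x.2) from rfl]; exact hLlin x.1 x.2
        ext
        · rfl
        · simp only [ContinuousLinearMap.prod_apply, ContinuousLinearMap.coe_fst',
            ContinuousLinearMap.smul_apply, ContinuousLinearMap.coe_sub',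
            ContinuousLinearMap.coe_snd', Pi.sub_apply, Pi.smul_apply, smul_eq_mul]
          show b⁻¹ * (L x - a * x.1) = x.2
          rw [hx]; field_simp; ring)
      (by
        intro v
        ext
        · rfl
        · simp only [ContinuousLinearMap.prod_apply, ContinuousLinearMap.coe_fst',
            ContinuousLinearMap.smul_apply, ContinuousLinearMap.coe_sub',
            ContinuousLinearMap.coe_snd', Pi.sub_apply, Pi.smul_apply, smul_eq_mul]
          show L (v.1, b⁻¹ * (v.2 - a * v.1)) = v.2
          rw [hLlin]; field_simp; ring)
    set F : ℂ × ℂ → ℂ × ℂ := fun p => (p.1, P p) with hFdef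
    have hFs : HasStrictFDerivAt F (i : (ℂ × ℂ) →L[ℂ] (ℂ × ℂ)) (ρ₀, π) := by
      have : (i : (ℂ × ℂ) →L[ℂ] (ℂ × ℂ)) = Lfst.prod L := rfl
      rw [this]
      exact (Lfst.hasStrictFDerivAt).prodMk hPs
    set f : OpenPartialHomeomorph (ℂ × ℂ) (ℂ × ℂ) := hFs.toOpenPartialHomeomorph F with hf
    have hmem : (ρ₀, π) ∈ f.source := hFs.mem_toOpenPartialHomeomorph_source
    have hfcoe : ⇑f = F := hFs.toOpenPartialHomeomorph_coe
    have hFan : AnalyticAt ℂ F (ρ₀, π) := analyticAt_fst.prod (hP _ (mem_univ _))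
    have hfan : AnalyticAt ℂ (⇑f) (ρ₀, π) := by rw [hfcoe]; exact hFan
    have hfderiv : fderiv ℂ (⇑f) (ρ₀, π) = i := by
      rw [hfcoe]; exact hFs.hasFDerivAt.fderiv
    have hsymm : AnalyticAt ℂ f.symm (f (ρ₀, π)) := f.analyticAt_symm' hmem hfan hfderiv
    have hfρπ : f (ρ₀, π) = (ρ₀, 0) := by
      rw [hfcoe]; simp only [hFdef]; rw [hπ]
    rw [hfρπ] at hsymm
    set g0 : ℂ → ℂ := fun z => (f.symm (z, 0)).2 with hg0def
    have hg0 : AnalyticAt ℂ g0 ρ₀ := by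
      have hinner : AnalyticAt ℂ (fun z : ℂ => (z, (0:ℂ))) ρ₀ :=
        analyticAt_id.prod analyticAt_const
      have h1 : AnalyticAt ℂ ((⇑f.symm) ∘ (fun z : ℂ => (z, (0:ℂ)))) ρ₀ :=
        AnalyticAt.comp (f := fun z : ℂ => (z, (0:ℂ))) (x := ρ₀) hsymm hinner
      have h2 : AnalyticAt ℂ (Prod.snd ∘ ((⇑f.symm) ∘ (fun z : ℂ => (z, (0:ℂ))))) ρ₀ :=
        analyticAt_snd.comp h1
      exact h2
    -- y and g0 agree eventually from the left
    have evsrc : ∀ᶠ x : ℝ in nhdsWithin ρ (Set.Iio ρ), ((x:ℂ), y x) ∈ f.source :=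
      htend (f.open_source.mem_nhds hmem)
    have evq : ∀ᶠ x : ℝ in nhdsWithin ρ (Set.Iio ρ), y (x:ℂ) = g0 (x:ℂ) := by
      filter_upwards [evsrc, evball] with x hx hb'
      have hFx : f ((x:ℂ), y x) = ((x:ℂ), 0) := by
        rw [hfcoe]; simp only [hFdef, hPdef]; rw [heq _ hb']
      have hli := f.left_inv hx
      rw [hFx] at hli
      rw [hg0def]
      simp only [hli]
    obtain ⟨l, hl, hsub⟩ := mem_nhdsLT_iff_exists_Ioo_subset.mp evq
    obtain ⟨r, hr, hball⟩ := Metric.eventually_nhds_iff_ball.mp hg0.eventually_analyticAt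
    set l' : ℝ := max l (max (ρ - r) (ρ / 2)) with hl'
    have hl'ρ : l' < ρ := by
      rw [hl']
      apply max_lt hl (max_lt (by linarith) (by linarith))
    set U : Set ℂ := Metric.ball (0 : ℂ) ρ ∩ Metric.ball ρ₀ r with hU
    have hUopen : IsOpen U := Metric.isOpen_ball.inter Metric.isOpen_ball
    have hUpre : IsPreconnected U :=
      ((convex_ball (0:ℂ) ρ).inter (convex_ball ρ₀ r)).isPreconnected
    have hIoo : ∀ x : ℝ, x ∈ Set.Ioo l' ρ → ((x:ℂ) ∈ U ∧ y (x:ℂ) = g0 (x:ℂ)) := by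
      intro x hx
      have hx0 : 0 < x := lt_of_lt_of_le (by linarith) (le_trans (le_max_right _ _)
        (le_max_right _ _) |>.trans hx.1.le)
      have hxr : ρ - r < x := lt_of_le_of_lt (le_trans (le_max_left _ _) (le_max_right _ _)) hx.1
      refine ⟨⟨?_, ?_⟩, hsub ⟨lt_of_le_of_lt (le_max_left _ _) hx.1, hx.2⟩⟩
      · simp only [Metric.mem_ball, Complex.dist_eq, sub_zero, Complex.norm_real, Real.norm_eq_abs]
        rw [abs_of_pos hx0]; exact hx.2
      · simp only [Metric.mem_ball, hρ₀, Complex.dist_eq]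
        rw [← Complex.ofReal_sub]
        rw [Complex.norm_real, Real.norm_eq_abs, abs_of_neg (sub_neg.mpr hx.2)]
        linarith
    set x₀ : ℝ := (l' + ρ) / 2 with hx₀def
    have hx₀ : x₀ ∈ Set.Ioo l' ρ := ⟨by rw [hx₀def]; linarith, by rw [hx₀def]; linarith⟩
    have hfreq : ∃ᶠ z in nhdsWithin (x₀ : ℂ) {(x₀:ℂ)}ᶜ, y z = g0 z := by
      have hev : ∀ᶠ x : ℝ in nhdsWithin x₀ {x₀}ᶜ, y (x:ℂ) = g0 (x:ℂ) := by
        have hIm : Set.Ioo l' ρ ∈ nhds x₀ := Ioo_mem_nhds hx₀.1 hx₀.2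
        filter_upwards [mem_nhdsWithin_of_mem_nhds hIm] with x hx using (hIoo x hx).2
      have hmap : Tendsto (fun x : ℝ => (x:ℂ)) (nhdsWithin x₀ {x₀}ᶜ)
          (nhdsWithin (x₀:ℂ) {(x₀:ℂ)}ᶜ) := by
        rw [tendsto_nhdsWithin_iff]
        constructor
        · exact Complex.continuous_ofReal.continuousAt.tendsto.mono_left nhdsWithin_le_nhds
        · filter_upwards [self_mem_nhdsWithin] with x hx
          simpa [Complex.ofReal_inj] using hx
      exact hmap.frequently hev.frequently
    have hyU : AnalyticOnNhd ℂ y U := fun z hz => hy z hz.1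
    have hgU : AnalyticOnNhd ℂ g0 U := fun z hz => hball z hz.2
    have heqU : Set.EqOn y g0 U :=
      hyU.eqOn_of_preconnected_of_frequently_eq hgU hUpre (hIoo x₀ hx₀).1 hfreq
    apply hsing
    refine ⟨g0, hg0, ?_⟩
    have hbm : Metric.ball ρ₀ r ∈ nhds ρ₀ := Metric.ball_mem_nhds _ hr
    filter_upwards [mem_nhdsWithin_of_mem_nhds hbm, self_mem_nhdsWithin] with z h1 h2
    exact (heqU ⟨h2, h1⟩).symm
  exact ⟨hπ, hQπ⟩


open Polynomial

/-- Localization of singularities of algebraic functions.  Let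
`Φ ∈ ℂ[z][y]` and let `y(z)` be analytic on the disc `|z| < ρ` with
`Φ(z, y(z)) = 0` there.  Suppose `ρ` is a singularity of `y` (no analytic
continuation to `ρ`), that `y(z) → π` as `z → ρ⁻` along the reals, and that
`Φ_y(z, y(z))` does not vanish identically.  Then `Φ(ρ, π) = 0` and
`Φ_y(ρ, π) = 0`; in particular `Φ(ρ,·)` and `Φ_y(ρ,·)` have a common root,
so the resultant `Δ(z) = Res_y(Φ, Φ_y)` vanishes at `z = ρ`. -/
theorem singularity_satisfies_system
    (Φ : Polynomial (Polynomial ℂ)) (y : ℂ → ℂ) (ρ : ℝ) (π : ℂ)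
    (hρ : 0 < ρ)
    (hy : AnalyticOnNhd ℂ y (Metric.ball (0 : ℂ) ρ))
    (heq : ∀ z ∈ Metric.ball (0 : ℂ) ρ,
      (Φ.map (evalRingHom z)).eval (y z) = 0)
    (hsing : ¬ ∃ g : ℂ → ℂ, AnalyticAt ℂ g (ρ : ℂ) ∧
      ∀ᶠ z in nhdsWithin (ρ : ℂ) (Metric.ball (0 : ℂ) ρ), g z = y z)
    (hlim : Filter.Tendsto (fun x : ℝ => y x)
      (nhdsWithin ρ (Set.Iio ρ)) (nhds π))
    (hnv : ¬ ∀ z ∈ Metric.ball (0 : ℂ) ρ,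
      ((derivative Φ).map (evalRingHom z)).eval (y z) = 0) :
    (Φ.map (evalRingHom (ρ : ℂ))).eval π = 0 ∧
    ((derivative Φ).map (evalRingHom (ρ : ℂ))).eval π = 0 ∧
    ∃ w : ℂ, (Φ.map (evalRingHom (ρ : ℂ))).eval w = 0 ∧
      ((derivative Φ).map (evalRingHom (ρ : ℂ))).eval w = 0 := by
  obtain ⟨h1, h2⟩ := main_aux Φ y ρ π hρ hy heq hsing hlim
  exact ⟨h1, h2, π, h1, h2⟩
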